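/- Let n ≥ 3 be odd and let X be a subgroup of the weight lattice Λ of SL(n+1). Then the following are equivalent: (i) X has full rank, X contains σ_1, …, σ_{n−1}, and the family {α_1^∨|_X, α_3^∨|_X, …, α_n^∨|_X} is part of a ℤ-basis of X^*; (ii) there exist e, r ∈ ℕ with e | (n+1)/2 and 0 ≤ r ≤ e−1 such that X = ⟨σ_2, σ_3, …, σ_{n−1}, e·ω_{n−1}, r·ω_{n−1} + ω_n⟩_ℤ. -/

import Mathlib

/-- The fundamental weights `ω_1, …, ω_n` of `SL(n+1)` in the weight lattice
`Λ = ℤⁿ`: `ω_j` is the `j`-th standard basis vector for `1 ≤ j ≤ n`, and by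
convention `ω_0 = ω_{n+1} = 0`. -/
def w (n : ℕ) (j : ℕ) : Fin n → ℤ := fun i => if (i : ℕ) + 1 = j then 1 else 0

/-- The simple roots of `SL(n+1)`: `α_i = 2ω_i − ω_{i−1} − ω_{i+1}` for `1 ≤ i ≤ n`. -/
def sroot (n : ℕ) (i : ℕ) : Fin n → ℤ := 2 • w n i - w n (i - 1) - w n (i + 1)

/-- `σ_i = α_i + α_{i+1}` for `1 ≤ i ≤ n−1`. -/
def sig (n : ℕ) (i : ℕ) : Fin n → ℤ := sroot n i + sroot n (i + 1)

/-- `ℤS⁺`, the subgroup of `Λ` generated by `σ_1, …, σ_{n−1}`. -/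
def ZSplus (n : ℕ) : Submodule ℤ (Fin n → ℤ) :=
  Submodule.span ℤ (sig n '' Set.Icc 1 (n - 1))

/-- A family of elements of a `ℤ`-module is *part of a basis* if it can be extended
to (i.e. realized injectively inside) a `ℤ`-basis. -/
def IsPartOfBasis {M : Type} [AddCommGroup M] [Module ℤ M] {ι : Type} (v : ι → M) : Prop :=
  ∃ (κ : Type) (b : Module.Basis κ ℤ M) (f : ι → κ), Function.Injective f ∧ ∀ i, b (f i) = v i

/-- The family of restrictions to `X` of the coroots with odd index
`α_1^∨, α_3^∨, …`, where `α_i^∨` is the `i`-th coordinate functional on `Λ = ℤⁿ`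
(i.e. `⟨α_i^∨, ω_j⟩ = δ_{ij}`), viewed as elements of `X^* = Hom_ℤ(X, ℤ)`.
The odd indices `1, 3, …` in `{1, …, n}` are enumerated by `j ↦ 2j+1`. -/
def oddCoroots (n : ℕ) (X : Submodule ℤ (Fin n → ℤ)) :
    Fin ((n + 1) / 2) → (X →ₗ[ℤ] ℤ) := fun j =>
  (LinearMap.proj (R := ℤ) (φ := fun _ : Fin n => ℤ)
    ⟨2 * (j : ℕ), by have := j.isLt; omega⟩).domRestrict X

/-- The map collecting the odd coordinates. -/
def Fmap (n : ℕ) : (Fin n → ℤ) →ₗ[ℤ] (Fin ((n + 1) / 2) → ℤ) :=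
  LinearMap.pi fun j => LinearMap.proj ⟨2 * (j : ℕ), by have := j.isLt; omega⟩

/-- Sum of odd coordinates. -/
def Amap (n : ℕ) : (Fin n → ℤ) →ₗ[ℤ] ℤ :=
  (∑ j : Fin ((n + 1) / 2), LinearMap.proj (R := ℤ) (φ := fun _ => ℤ) j).comp (Fmap n)

def bCoeff (n : ℕ) (c : ℕ) : ℤ := (((n + 1) / 2 : ℕ) : ℤ) - ((c / 2 : ℕ) : ℤ)

/-- The functional `s_o` (sum of odd partial sums). -/
def Bmap (n : ℕ) : (Fin n → ℤ) →ₗ[ℤ] ℤ :=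
  ∑ i : Fin n, bCoeff n ((i : ℕ) + 1) • LinearMap.proj i

lemma Fmap_apply (n : ℕ) (x : Fin n → ℤ) (j : Fin ((n + 1) / 2)) :
    Fmap n x j = x ⟨2 * (j : ℕ), by have := j.isLt; omega⟩ := rfl

lemma Amap_apply (n : ℕ) (x : Fin n → ℤ) : Amap n x = ∑ j, Fmap n x j := by
  simp [Amap, Fmap]

lemma Bmap_apply (n : ℕ) (x : Fin n → ℤ) :
    Bmap n x = ∑ i : Fin n, bCoeff n ((i : ℕ) + 1) * x i := by
  simp [Bmap]

lemma Fmap_w (n c : ℕ) (j : Fin ((n + 1) / 2)) :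
    Fmap n (w n c) j = if 2 * (j : ℕ) + 1 = c then 1 else 0 := rfl

lemma w_apply (n c : ℕ) (i : Fin n) : w n c i = if (i : ℕ) + 1 = c then 1 else 0 := rfl

lemma Amap_w (n c : ℕ) : Amap n (w n c) = if c % 2 = 1 ∧ c ≤ n then 1 else 0 := by
  rw [Amap_apply]
  by_cases hc : c % 2 = 1 ∧ c ≤ n
  · have hlt : (c - 1) / 2 < (n + 1) / 2 := by omega
    rw [if_pos hc, Finset.sum_eq_single ⟨(c - 1) / 2, hlt⟩]
    · rw [Fmap_w, if_pos (by simp; omega)]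
    · intro j _ hj
      rw [Fmap_w, if_neg]
      intro h
      exact hj (by apply Fin.ext; simp; omega)
    · simp
  · rw [if_neg hc, Finset.sum_eq_zero]
    intro j _
    rw [Fmap_w, if_neg]
    have := j.isLt
    omega

lemma Bmap_w (n c : ℕ) :
    Bmap n (w n c) = if 1 ≤ c ∧ c ≤ n then bCoeff n c else 0 := by
  rw [Bmap_apply]
  by_cases hc : 1 ≤ c ∧ c ≤ n
  · have hlt : c - 1 < n := by omega
    rw [if_pos hc, Finset.sum_eq_single ⟨c - 1, hlt⟩]
    · rw [w_apply, if_pos (by simp; omega)]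
      simp
      congr 1
      omega
    · intro i _ hi
      rw [w_apply, if_neg, mul_zero]
      intro h
      exact hi (by apply Fin.ext; simp; omega)
    · simp
  · rw [Finset.sum_eq_zero, if_neg hc]
    intro i _
    rw [w_apply, if_neg, mul_zero]
    have := i.isLt
    omega

lemma w_eq_zero (n c : ℕ) (h : c = 0 ∨ n < c) : w n c = 0 := by
  funext i
  have := i.isLt
  rw [w_apply, if_neg (by omega)]
  rfl

lemma sig_eq (n i : ℕ) (hi : 1 ≤ i) :
    sig n i = w n i + w n (i + 1) - w n (i - 1) - w n (i + 2) := by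
  have h1 : i + 1 - 1 = i := by omega
  simp only [sig, sroot, h1]
  abel


lemma Amap_sig (n i : ℕ) (hn : 3 ≤ n) (hno : n % 2 = 1) (h1 : 1 ≤ i) (h2 : i ≤ n - 1) :
    Amap n (sig n i) = 0 := by
  rw [sig_eq n i h1]
  simp only [map_sub, map_add, Amap_w]
  split_ifs <;> omega

lemma Bmap_sig (n i : ℕ) (hn : 3 ≤ n) (hno : n % 2 = 1) (h1 : 2 ≤ i) (h2 : i ≤ n - 1) :
    Bmap n (sig n i) = 0 := by
  rw [sig_eq n i (by omega)]
  simp only [map_sub, map_add, Bmap_w, bCoeff]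
  split_ifs <;> push_cast <;> omega

lemma Bmap_sig_one (n : ℕ) (hn : 3 ≤ n) (hno : n % 2 = 1) :
    Bmap n (sig n 1) = (((n + 1) / 2 : ℕ) : ℤ) := by
  rw [sig_eq n 1 le_rfl]
  rw [w_eq_zero n (1 - 1) (by omega)]
  simp only [map_sub, map_add, Bmap_w, bCoeff, map_zero]
  split_ifs <;> push_cast <;> omega

lemma Fmap_sig (n t : ℕ) (hn : 3 ≤ n) (h1 : 1 ≤ t) (h2 : 2 * t ≤ n - 1) :
    Fmap n (sig n (2 * t)) =
      fun j : Fin ((n + 1) / 2) => (if (j : ℕ) = t then (1:ℤ) else 0) - (if (j : ℕ) = t - 1 then (1:ℤ) else 0) := by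
  funext j
  have hj := j.isLt
  rw [sig_eq n (2 * t) (by omega)]
  simp only [map_sub, map_add, Pi.sub_apply, Pi.add_apply, Fmap_w]
  split_ifs <;> omega

/-- The span of `σ_2, …, σ_{n-1}`. -/
def Dspan (n : ℕ) : Submodule ℤ (Fin n → ℤ) :=
  Submodule.span ℤ (sig n '' Set.Icc 2 (n - 1))

lemma sig_mem_D (n i : ℕ) (h1 : 2 ≤ i) (h2 : i ≤ n - 1) : sig n i ∈ Dspan n :=
  Submodule.subset_span ⟨i, ⟨h1, h2⟩, rfl⟩

lemma sig_apply (n i : ℕ) (hi : 1 ≤ i) (p : Fin n) :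
    sig n i p = (if (p : ℕ) + 1 = i then 1 else 0) + (if (p : ℕ) + 1 = i + 1 then 1 else 0)
      - (if (p : ℕ) + 1 = i - 1 then 1 else 0) - (if (p : ℕ) + 1 = i + 2 then 1 else 0) := by
  rw [sig_eq n i hi]
  simp only [Pi.sub_apply, Pi.add_apply, w_apply]

lemma mem_D_of_ker (n : ℕ) (hn : 3 ≤ n) (hno : n % 2 = 1) (x : Fin n → ℤ)
    (hA : Amap n x = 0) (hB : Bmap n x = 0) : x ∈ Dspan n := by
  suffices H : ∀ d : ℕ, ∀ x : Fin n → ℤ, Amap n x = 0 → Bmap n x = 0 →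
      (∀ i : Fin n, (i : ℕ) < n - 2 - d → x i = 0) → x ∈ Dspan n by
    exact H (n - 2) x hA hB (by intro i h; omega)
  intro d
  induction d with
  | zero =>
    -- base case: x vanishes below n - 2
    intro x hA hB hx
    have hn1 : n - 1 < n := by omega
    have hn2 : n - 2 < n := by omega
    -- A x = x ⟨n-1⟩
    have hA' : x ⟨n - 1, hn1⟩ = 0 := by
      rw [Amap_apply] at hA
      rw [Finset.sum_eq_single ⟨(n - 1) / 2, by omega⟩] at hA
      · rw [Fmap_apply] at hA
        have he : (⟨n - 1, hn1⟩ : Fin n) =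
            ⟨2 * ((⟨(n - 1) / 2, by omega⟩ : Fin ((n + 1) / 2)) : ℕ), by omega⟩ := by
          apply Fin.ext
          simp
          omega
        rw [he]
        exact hA
      · intro j _ hj
        rw [Fmap_apply]
        apply hx
        simp
        have := j.isLt
        have h2j : 2 * (j : ℕ) ≠ n - 1 := by
          intro h
          exact hj (by apply Fin.ext; simp; omega)
        omega
      · simp
    -- B x = x ⟨n-2⟩ + x ⟨n-1⟩
    have hB' : x ⟨n - 2, hn2⟩ = 0 := by
      rw [Bmap_apply] at hB
      have hne : (⟨n - 2, hn2⟩ : Fin n) ≠ ⟨n - 1, hn1⟩ := by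
        intro h
        rw [Fin.ext_iff] at h
        simp at h
        omega
      rw [← Finset.sum_subset (Finset.subset_univ {(⟨n - 2, hn2⟩ : Fin n), ⟨n - 1, hn1⟩})
          (by
            intro i _ hi
            simp at hi
            rw [hx i, mul_zero]
            rw [Fin.ext_iff, Fin.ext_iff] at hi
            simp at hi
            have := i.isLt
            omega),
        Finset.sum_pair hne] at hB
      rw [hA', mul_zero, add_zero] at hB
      have hco : bCoeff n ((n - 2 : ℕ) + 1) = 1 := by
        simp only [bCoeff]
        push_cast
        omega
      rw [hco, one_mul] at hB
      exact hB
    have : x = 0 := by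
      funext i
      have := i.isLt
      rcases lt_trichotomy ((i : ℕ)) (n - 2) with h | h | h
      · exact hx i (by omega)
      · have : i = (⟨n - 2, hn2⟩ : Fin n) := Fin.ext h
        rw [this]; exact hB'
      · have : i = (⟨n - 1, hn1⟩ : Fin n) := Fin.ext (by simp; omega)
        rw [this]; exact hA'
    rw [this]
    exact (Dspan n).zero_mem
  | succ d ih =>
    intro x hA hB hx
    by_cases hd : n - 2 - (d + 1) = n - 2 - d
    · exact ih x hA hB (by intro i h; exact hx i (by omega))
    · set k := n - 2 - (d + 1) with hk
      have hkd : n - 2 - d = k + 1 := by omega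
      have hkn : k < n - 2 := by omega
      have hkn' : k < n := by omega
      set c := x ⟨k, hkn'⟩ with hc
      set y := x + c • sig n (k + 2) with hy
      have hmem : sig n (k + 2) ∈ Dspan n := sig_mem_D n (k + 2) (by omega) (by omega)
      have hyA : Amap n y = 0 := by
        rw [hy, map_add, map_smul, Amap_sig n (k + 2) hn hno (by omega) (by omega), hA]
        simp
      have hyB : Bmap n y = 0 := by
        rw [hy, map_add, map_smul, Bmap_sig n (k + 2) hn hno (by omega) (by omega), hB]
        simp
      have hyx : ∀ i : Fin n, (i : ℕ) < n - 2 - d → y i = 0 := by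
        intro i hi
        rw [hkd] at hi
        have hsv := sig_apply n (k + 2) (by omega) i
        rcases lt_or_eq_of_le (Nat.lt_succ_iff.mp hi) with h | h
        · have : sig n (k + 2) i = 0 := by rw [hsv]; split_ifs <;> omega
          rw [hy]
          simp [this]
          exact hx i (by omega)
        · have : sig n (k + 2) i = -1 := by rw [hsv]; split_ifs <;> omega
          have hix : i = (⟨k, hkn'⟩ : Fin n) := Fin.ext h
          rw [hy]
          simp [this]
          rw [hix, ← hc]
          ring
      have hyD := ih y hyA hyB hyx
      have : x = y - c • sig n (k + 2) := by rw [hy]; abel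
      rw [this]
      exact Submodule.sub_mem _ hyD (Submodule.smul_mem _ _ hmem)

lemma sum_ind {k : ℕ} (t : ℕ) (ht : t < k) :
    ∑ j : Fin k, (if (j : ℕ) = t then (1 : ℤ) else 0) = 1 := by
  rw [Finset.sum_eq_single ⟨t, ht⟩]
  · simp
  · intro j _ hj
    rw [if_neg]
    intro h
    exact hj (Fin.ext h)
  · simp

lemma exists_D_Fmap (n : ℕ) (hn : 3 ≤ n) (hno : n % 2 = 1)
    (v : Fin ((n + 1) / 2) → ℤ) (hv : ∑ j, v j = 0) :
    ∃ x ∈ Dspan n, Fmap n x = v := by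
  set m := (n - 1) / 2 with hm
  suffices H : ∀ d : ℕ, ∀ v : Fin ((n + 1) / 2) → ℤ, (∑ j, v j = 0) →
      (∀ j : Fin ((n + 1) / 2), (j : ℕ) < m - d → v j = 0) → ∃ x ∈ Dspan n, Fmap n x = v by
    exact H m v hv (by intro j h; omega)
  intro d
  induction d with
  | zero =>
    intro v hv hx
    have hmlt : m < (n + 1) / 2 := by omega
    have hvm : v ⟨m, hmlt⟩ = 0 := by
      rw [Finset.sum_eq_single ⟨m, hmlt⟩] at hv
      · exact hv
      · intro j _ hj
        apply hx
        simp
        have := j.isLt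
        have : (j : ℕ) ≠ m := fun h => hj (Fin.ext (by simpa using h))
        omega
      · simp
    have : v = 0 := by
      funext j
      have := j.isLt
      rcases lt_or_eq_of_le (Nat.lt_succ_iff.mp (by omega : (j : ℕ) < m + 1)) with h | h
      · exact hx j (by omega)
      · have : j = (⟨m, hmlt⟩ : Fin ((n + 1) / 2)) := Fin.ext h
        rw [this]; exact hvm
    refine ⟨0, (Dspan n).zero_mem, ?_⟩
    rw [this, map_zero]
  | succ d ih =>
    intro v hv hx
    by_cases hd : m - (d + 1) = m - d
    · exact ih v hv (by intro j h; exact hx j (by omega))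
    · set k := m - (d + 1) with hk
      have hkd : m - d = k + 1 := by omega
      have hkm : k < m := by omega
      have hsig := Fmap_sig n (k + 1) hn (by omega) (by omega)
      have hsmem : sig n (2 * (k + 1)) ∈ Dspan n := sig_mem_D n _ (by omega) (by omega)
      set c := v ⟨k, by omega⟩ with hc
      set v' := v + c • (Fmap n (sig n (2 * (k + 1)))) with hv'
      have hsum : ∑ j, v' j = 0 := by
        rw [hv']
        simp only [Pi.add_apply, Pi.smul_apply, smul_eq_mul]
        rw [Finset.sum_add_distrib, hv, ← Finset.mul_sum, hsig]
        have h1 : ∑ j : Fin ((n + 1) / 2),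
            ((if (j : ℕ) = k + 1 then (1 : ℤ) else 0) - (if (j : ℕ) = k + 1 - 1 then (1 : ℤ) else 0)) = 0 := by
          rw [Finset.sum_sub_distrib, sum_ind (k + 1) (by omega), sum_ind (k + 1 - 1) (by omega)]
          ring
        rw [h1]
        ring
      have hvan : ∀ j : Fin ((n + 1) / 2), (j : ℕ) < m - d → v' j = 0 := by
        intro j hj
        rw [hkd] at hj
        rw [hv']
        simp only [Pi.add_apply, Pi.smul_apply, smul_eq_mul, hsig]
        rcases lt_or_eq_of_le (Nat.lt_succ_iff.mp hj) with h | h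
        · rw [if_neg (by omega), if_neg (by omega), hx j (by omega)]
          ring
        · rw [if_neg (by omega), if_pos (by omega), hc]
          have : j = (⟨k, by omega⟩ : Fin ((n + 1) / 2)) := Fin.ext h
          rw [this]
          ring
      obtain ⟨x', hx'D, hx'F⟩ := ih v' hsum hvan
      refine ⟨x' - c • sig n (2 * (k + 1)), Submodule.sub_mem _ hx'D (Submodule.smul_mem _ _ hsmem), ?_⟩
      rw [map_sub, map_smul, hx'F, hv']
      abel

lemma pi_odd (n : ℕ) (X : Submodule ℤ (Fin n → ℤ)) (x : X) :
    LinearMap.pi (oddCoroots n X) x = Fmap n (x : Fin n → ℤ) := rfl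

section Part5

lemma surjective_of_isPartOfBasis {M : Type} [AddCommGroup M] [Module ℤ M]
    [Module.Finite ℤ M] [Module.Free ℤ M] {k : ℕ} (ν : Fin k → (M →ₗ[ℤ] ℤ))
    (h : IsPartOfBasis ν) : Function.Surjective (LinearMap.pi ν) := by
  classical
  obtain ⟨κ, b, f, hf, hb⟩ := h
  intro v
  refine ⟨∑ j, v j • (Module.evalEquiv ℤ M).symm (b.coord (f j)), ?_⟩
  funext i
  simp only [LinearMap.pi_apply, map_sum, map_smul, smul_eq_mul,
    Module.apply_evalEquiv_symm_apply, Module.Basis.coord_apply]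
  rw [← hb i]
  simp [Module.Basis.repr_self, Finsupp.single_apply, hf.eq_iff]

attribute [local instance 0] AddCommGroup.toIntModule

set_option maxHeartbeats 1000000 in
set_option synthInstance.maxHeartbeats 400000 in
lemma isPartOfBasis_of_surjective {M : Type} [AddCommGroup M] [Module ℤ M]
    [Module.Finite ℤ M] [Module.Free ℤ M] [NoZeroSMulDivisors ℤ M] {k : ℕ}
    (ν : Fin k → (M →ₗ[ℤ] ℤ)) (hs : Function.Surjective (LinearMap.pi ν)) :
    IsPartOfBasis ν := by
  classical
  set F : M →ₗ[ℤ] (Fin k → ℤ) := LinearMap.pi ν with hF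
  obtain ⟨s, hsF⟩ := Module.projective_lifting_property F LinearMap.id hs
  have hFs : ∀ u, F (s u) = u := fun u => LinearMap.congr_fun hsF u
  set K := LinearMap.ker F with hK
  set g : M →ₗ[ℤ] M := LinearMap.id - s ∘ₗ F with hg
  have hker : ∀ x : M, g x ∈ K := by
    intro x
    simp [hg, hK, LinearMap.mem_ker, map_sub, hFs]
  let e1 : M →ₗ[ℤ] K := LinearMap.codRestrict K g hker
  haveI : IsNoetherian ℤ M := isNoetherian_of_isNoetherianRing_of_finite ℤ M
  haveI : Module.Finite ℤ K := Module.Finite.iff_fg.mpr (IsNoetherian.noetherian K)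
  haveI : Module.Free ℤ K := Module.free_of_finite_type_torsion_free'
  let fwd : M →ₗ[ℤ] K × (Fin k → ℤ) := e1.prod F
  let pr1 : K × (Fin k → ℤ) →ₗ[ℤ] K := LinearMap.fst _ _ _
  let pr2 : K × (Fin k → ℤ) →ₗ[ℤ] (Fin k → ℤ) := LinearMap.snd _ _ _
  let bwd : K × (Fin k → ℤ) →ₗ[ℤ] M := K.subtype.comp pr1 + s.comp pr2
  have h1 : bwd.comp fwd = LinearMap.id := by
    apply LinearMap.ext
    intro x
    simp [bwd, fwd, e1, hg, pr1, pr2]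
  have h2 : fwd.comp bwd = LinearMap.id := by
    apply LinearMap.ext
    intro z
    obtain ⟨p, v⟩ := z
    have hFp : F (p : M) = 0 := p.2
    apply Prod.ext
    · apply Subtype.ext
      simp [bwd, fwd, e1, hg, pr1, pr2, hFp, hFs, map_add]
    · simp [bwd, fwd, pr1, pr2, hFp, hFs, map_add]
  let E : M ≃ₗ[ℤ] K × (Fin k → ℤ) := LinearEquiv.ofLinear fwd bwd h2 h1
  let bK := Module.Free.chooseBasis ℤ K
  let bM := (bK.prod (Pi.basisFun ℤ (Fin k))).map E.symm
  have hrepr : ∀ (i : Fin k) (x : M), bM.repr x (Sum.inr i) = ν i x := by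
    intro i x
    simp only [bM, Module.Basis.map_repr, LinearEquiv.symm_symm, LinearEquiv.trans_apply]
    rw [Module.Basis.prod_repr_inr, Pi.basisFun_repr]
    have : (E x).2 = F x := rfl
    rw [this, hF, LinearMap.pi_apply]
  refine ⟨_, bM.dualBasis, Sum.inr, Sum.inr_injective, fun i => ?_⟩
  apply LinearMap.ext
  intro x
  rw [show (bM.dualBasis (Sum.inr i) : M →ₗ[ℤ] ℤ) x = bM.coord (Sum.inr i) x by
    rw [Module.Basis.coe_dualBasis], Module.Basis.coord_apply, hrepr]

end Part5

set_option maxHeartbeats 1000000 in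
set_option synthInstance.maxHeartbeats 400000 in
lemma dir2 (n : ℕ) (hn : 3 ≤ n) (hno' : n % 2 = 1) (e r : ℕ) (hdvd : e ∣ (n + 1) / 2)
    (X : Submodule ℤ (Fin n → ℤ))
    (hX : X = Submodule.span ℤ (sig n '' Set.Icc 2 (n - 1) ∪
      {(e : ℤ) • w n (n - 1), (r : ℤ) • w n (n - 1) + w n n})) :
    Module.finrank ℤ X = n ∧ (∀ i ∈ Set.Icc 1 (n - 1), sig n i ∈ X) ∧
      IsPartOfBasis (oddCoroots n X) := by
  have he1 : 1 ≤ e := by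
    rcases Nat.eq_zero_or_pos e with h | h
    · subst h
      have := Nat.eq_zero_of_zero_dvd hdvd
      omega
    · exact h
  set gen1 : Fin n → ℤ := (e : ℤ) • w n (n - 1) with hgen1
  set gen2 : Fin n → ℤ := (r : ℤ) • w n (n - 1) + w n n with hgen2
  have hAw1 : Amap n (w n (n - 1)) = 0 := by rw [Amap_w, if_neg]; omega
  have hAw2 : Amap n (w n n) = 1 := by rw [Amap_w, if_pos]; omega
  have hBw1 : Bmap n (w n (n - 1)) = 1 := by
    rw [Bmap_w, if_pos (by omega)]
    simp only [bCoeff]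
    push_cast
    omega
  have hBw2 : Bmap n (w n n) = 1 := by
    rw [Bmap_w, if_pos (by omega)]
    simp only [bCoeff]
    push_cast
    omega
  have hAg1 : Amap n gen1 = 0 := by rw [hgen1, map_smul, hAw1, smul_zero]
  have hBg1 : Bmap n gen1 = (e : ℤ) := by rw [hgen1, map_smul, hBw1, smul_eq_mul, mul_one]
  have hAg2 : Amap n gen2 = 1 := by
    rw [hgen2, map_add, map_smul, hAw1, hAw2, smul_zero, zero_add]
  have hBg2 : Bmap n gen2 = (r : ℤ) + 1 := by
    rw [hgen2, map_add, map_smul, hBw1, hBw2, smul_eq_mul, mul_one]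
  have hg1Y : gen1 ∈ X := by
    rw [hX]
    exact Submodule.subset_span (Set.mem_union_right _ (Set.mem_insert _ _))
  have hg2Y : gen2 ∈ X := by
    rw [hX]
    exact Submodule.subset_span (Set.mem_union_right _ (Set.mem_insert_of_mem _ rfl))
  have hDY : Dspan n ≤ X := by
    rw [hX]
    exact Submodule.span_mono Set.subset_union_left
  have Ymem : ∀ v : Fin n → ℤ, (e : ℤ) ∣ (Bmap n v - Amap n v * ((r : ℤ) + 1)) → v ∈ X := by
    intro v hv
    obtain ⟨c, hc⟩ := hv
    have hmem : v - (Amap n v) • gen2 - c • gen1 ∈ Dspan n := by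
      apply mem_D_of_ker n hn hno'
      · simp only [map_sub, map_smul, hAg1, hAg2, smul_eq_mul, mul_one, mul_zero]
        ring
      · simp only [map_sub, map_smul, hBg1, hBg2, smul_eq_mul]
        linear_combination hc
    have hvrepr : v = (v - (Amap n v) • gen2 - c • gen1) + (Amap n v) • gen2 + c • gen1 := by
      abel
    rw [hvrepr]
    exact Submodule.add_mem _ (Submodule.add_mem _ (hDY hmem)
      (Submodule.smul_mem _ _ hg2Y)) (Submodule.smul_mem _ _ hg1Y)
  have hsigX : ∀ i ∈ Set.Icc 1 (n - 1), sig n i ∈ X := by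
    intro i hi
    obtain ⟨hi1, hi2⟩ := hi
    apply Ymem
    rw [Amap_sig n i hn hno' hi1 hi2, zero_mul, sub_zero]
    rcases Nat.lt_or_ge i 2 with h | h
    · have : i = 1 := by omega
      rw [this, Bmap_sig_one n hn hno']
      exact Int.natCast_dvd_natCast.mpr hdvd
    · rw [Bmap_sig n i hn hno' h hi2]
      exact dvd_zero _
  refine ⟨?_, hsigX, ?_⟩
  · -- finrank
    have he0' : (e : ℤ) ≠ 0 := by exact_mod_cast (by omega : e ≠ 0)
    set φ : (Fin n → ℤ) →ₗ[ℤ] (Fin n → ℤ) := LinearMap.lsmul ℤ _ (e : ℤ) with hφ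
    have hinj : Function.Injective φ := by
      intro a b hab
      exact smul_right_injective _ he0' hab
    have hle1 : LinearMap.range φ ≤ X := by
      rintro _ ⟨u, rfl⟩
      apply Ymem
      simp only [hφ, LinearMap.lsmul_apply, map_smul, smul_eq_mul]
      exact ⟨Bmap n u - Amap n u * ((r : ℤ) + 1), by ring⟩
    have hfr : Module.finrank ℤ (LinearMap.range φ) = n := by
      rw [← (LinearEquiv.ofInjective φ hinj).finrank_eq]
      simp [Module.finrank_pi]
    have hfin : Module.finrank ℤ (Fin n → ℤ) = n := by simp [Module.finrank_pi]
    have h1 := Submodule.finrank_le (R := ℤ) (M := Fin n → ℤ) X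
    have h2 := Submodule.finrank_mono (R := ℤ) (M := Fin n → ℤ) hle1
    rw [hfin] at h1
    rw [hfr] at h2
    omega
  · -- IsPartOfBasis
    have hFg2 : Fmap n gen2 = fun j : Fin ((n + 1) / 2) => if (j : ℕ) = (n - 1) / 2 then (1 : ℤ) else 0 := by
      funext j
      have hj := j.isLt
      rw [hgen2]
      simp only [map_add, map_smul, Pi.add_apply, Pi.smul_apply, Fmap_w, smul_eq_mul]
      split_ifs <;> omega
    haveI : NoZeroSMulDivisors ℤ X := Function.Injective.noZeroSMulDivisors (fun x : X => (x : Fin n → ℤ)) Subtype.coe_injective rfl (fun _ _ => rfl)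
    apply isPartOfBasis_of_surjective
    intro v
    set sv := ∑ j, v j with hsv
    have hsum : ∑ j, (v - sv • Fmap n gen2) j = 0 := by
      simp only [Pi.sub_apply, Pi.smul_apply, smul_eq_mul, Finset.sum_sub_distrib,
        ← Finset.mul_sum, hFg2]
      rw [sum_ind ((n - 1) / 2) (by omega)]
      simp [hsv]
    obtain ⟨x', hx'D, hx'F⟩ := exists_D_Fmap n hn hno' _ hsum
    refine ⟨⟨x' + sv • gen2, Submodule.add_mem _ (hDY hx'D) (Submodule.smul_mem _ _ hg2Y)⟩, ?_⟩
    rw [pi_odd]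
    rw [map_add, map_smul, hx'F]
    funext j
    simp only [Pi.add_apply, Pi.sub_apply, Pi.smul_apply, smul_eq_mul]
    ring

set_option maxHeartbeats 1000000 in
set_option synthInstance.maxHeartbeats 400000 in
lemma dir1 (n : ℕ) (hn : 3 ≤ n) (hno' : n % 2 = 1) (X : Submodule ℤ (Fin n → ℤ))
    (h2 : ∀ i ∈ Set.Icc 1 (n - 1), sig n i ∈ X) (h3 : IsPartOfBasis (oddCoroots n X)) :
    ∃ e r : ℕ, e ∣ (n + 1) / 2 ∧ r ≤ e - 1 ∧
      X = Submodule.span ℤ (sig n '' Set.Icc 2 (n - 1) ∪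
        {(e : ℤ) • w n (n - 1), (r : ℤ) • w n (n - 1) + w n n}) := by
  have hDX : Dspan n ≤ X := by
    rw [Dspan, Submodule.span_le]
    rintro _ ⟨i, hi, rfl⟩
    obtain ⟨hi1, hi2⟩ := hi
    exact h2 i ⟨by omega, hi2⟩
  -- surjectivity of the odd coordinate map restricted to X
  have hsurj := surjective_of_isPartOfBasis (oddCoroots n X) h3
  have hFsur : ∀ v : Fin ((n + 1) / 2) → ℤ, ∃ x, x ∈ X ∧ Fmap n x = v := by
    intro v
    obtain ⟨x, hx⟩ := hsurj v
    exact ⟨(x : Fin n → ℤ), x.2, by rw [← pi_odd n X x]; exact hx⟩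
  -- an element with A = 1
  obtain ⟨x₀, hx₀X, hx₀F⟩ := hFsur (fun j => if (j : ℕ) = 0 then 1 else 0)
  have hAx₀ : Amap n x₀ = 1 := by
    rw [Amap_apply, hx₀F, sum_ind 0 (by omega)]
  -- the ideal of B-values on X ∩ ker A
  set J : Submodule ℤ ℤ := Submodule.map (Bmap n) (X ⊓ LinearMap.ker (Amap n)) with hJ
  obtain ⟨g, hgJ⟩ := (inferInstance : J.IsPrincipal).principal
  set e : ℕ := g.natAbs with he
  have hgmem : ∀ z : ℤ, z ∈ J → (e : ℤ) ∣ z := by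
    intro z hz
    rw [hgJ, Submodule.mem_span_singleton] at hz
    obtain ⟨c, rfl⟩ := hz
    exact Dvd.dvd.mul_left (Int.natAbs_dvd.mpr dvd_rfl) c
  have hememJ : (e : ℤ) ∈ J := by
    have hgmemJ : g ∈ J := by
      rw [hgJ]
      exact Submodule.mem_span_singleton_self g
    rcases Int.natAbs_eq g with h | h
    · rw [← h]; exact hgmemJ
    · rw [← neg_neg ((e : ℤ)), ← h]
      exact Submodule.neg_mem _ hgmemJ
  -- σ₁ and the divisibility e ∣ (n+1)/2
  have hs1X : sig n 1 ∈ X := h2 1 ⟨le_refl 1, by omega⟩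
  have hs1A : Amap n (sig n 1) = 0 := Amap_sig n 1 hn hno' le_rfl (by omega)
  have hm1J : (((n + 1) / 2 : ℕ) : ℤ) ∈ J := by
    rw [hJ]
    refine ⟨sig n 1, ⟨hs1X, hs1A⟩, Bmap_sig_one n hn hno'⟩
  have hdvd : e ∣ (n + 1) / 2 := Int.natCast_dvd_natCast.mp (hgmem _ hm1J)
  have he0 : e ≠ 0 := by
    intro h
    rw [h] at hdvd
    have := Nat.eq_zero_of_zero_dvd hdvd
    omega
  have he0' : (0 : ℤ) < (e : ℤ) := by exact_mod_cast Nat.pos_of_ne_zero he0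
  -- the residue r
  set r : ℕ := ((Bmap n x₀ - 1) % (e : ℤ)).toNat with hr
  have hrval : (r : ℤ) = (Bmap n x₀ - 1) % (e : ℤ) :=
    Int.toNat_of_nonneg (Int.emod_nonneg _ (by omega))
  have hrlt : (r : ℤ) < (e : ℤ) := by
    rw [hrval]
    exact Int.emod_lt_of_pos _ he0'
  have hrle : r ≤ e - 1 := by
    have : r < e := by exact_mod_cast hrlt
    omega
  set q : ℤ := (Bmap n x₀ - 1) / (e : ℤ) with hq
  have hqr : Bmap n x₀ - 1 = (e : ℤ) * q + (r : ℤ) := by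
    rw [hrval, hq]
    exact (Int.mul_ediv_add_emod _ _).symm
  -- values on the generators
  set gen1 : Fin n → ℤ := (e : ℤ) • w n (n - 1) with hgen1
  set gen2 : Fin n → ℤ := (r : ℤ) • w n (n - 1) + w n n with hgen2
  have hAw1 : Amap n (w n (n - 1)) = 0 := by rw [Amap_w, if_neg]; omega
  have hAw2 : Amap n (w n n) = 1 := by rw [Amap_w, if_pos]; omega
  have hBw1 : Bmap n (w n (n - 1)) = 1 := by
    rw [Bmap_w, if_pos (by omega)]
    simp only [bCoeff]
    push_cast
    omega
  have hBw2 : Bmap n (w n n) = 1 := by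
    rw [Bmap_w, if_pos (by omega)]
    simp only [bCoeff]
    push_cast
    omega
  have hAg1 : Amap n gen1 = 0 := by rw [hgen1, map_smul, hAw1, smul_zero]
  have hBg1 : Bmap n gen1 = (e : ℤ) := by rw [hgen1, map_smul, hBw1, smul_eq_mul, mul_one]
  have hAg2 : Amap n gen2 = 1 := by
    rw [hgen2, map_add, map_smul, hAw1, hAw2, smul_zero, zero_add]
  have hBg2 : Bmap n gen2 = (r : ℤ) + 1 := by
    rw [hgen2, map_add, map_smul, hBw1, hBw2, smul_eq_mul, mul_one]
  -- gen1 ∈ X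
  obtain ⟨y, ⟨hyX, hyA⟩, hyB⟩ := hememJ
  have hg1X : gen1 ∈ X := by
    have hmem : gen1 - y ∈ Dspan n := by
      apply mem_D_of_ker n hn hno'
      · rw [map_sub, hAg1, LinearMap.mem_ker.mp hyA, sub_zero]
      · rw [map_sub, hBg1, hyB, sub_self]
    have : gen1 = (gen1 - y) + y := by abel
    rw [this]
    exact Submodule.add_mem _ (hDX hmem) hyX
  -- gen2 ∈ X
  have hg2X : gen2 ∈ X := by
    have hmem : gen2 - x₀ + q • gen1 ∈ Dspan n := by
      apply mem_D_of_ker n hn hno'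
      · rw [map_add, map_sub, map_smul, hAg1, hAg2, hAx₀, smul_zero]
        ring
      · rw [map_add, map_sub, map_smul, hBg1, hBg2, smul_eq_mul]
        linear_combination -hqr
    have : gen2 = (gen2 - x₀ + q • gen1) + x₀ - q • gen1 := by abel
    rw [this]
    exact Submodule.sub_mem _ (Submodule.add_mem _ (hDX hmem) hx₀X)
      (Submodule.smul_mem _ _ hg1X)
  refine ⟨e, r, hdvd, hrle, ?_⟩
  apply le_antisymm
  · -- X ≤ span
    intro x hx
    set Y := Submodule.span ℤ (sig n '' Set.Icc 2 (n - 1) ∪ {gen1, gen2}) with hY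
    have hg1Y : gen1 ∈ Y :=
      Submodule.subset_span (Set.mem_union_right _ (Set.mem_insert _ _))
    have hg2Y : gen2 ∈ Y :=
      Submodule.subset_span (Set.mem_union_right _ (Set.mem_insert_of_mem _ rfl))
    have hDY : Dspan n ≤ Y := Submodule.span_mono Set.subset_union_left
    set a : ℤ := Amap n x with ha
    have hzX : x - a • gen2 ∈ X := Submodule.sub_mem _ hx (Submodule.smul_mem _ _ hg2X)
    have hzA : Amap n (x - a • gen2) = 0 := by
      rw [map_sub, map_smul, hAg2, smul_eq_mul, mul_one, ha, sub_self]
    have hzJ : Bmap n (x - a • gen2) ∈ J := ⟨x - a • gen2, ⟨hzX, hzA⟩, rfl⟩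
    obtain ⟨s, hs⟩ := hgmem _ hzJ
    have hmem : x - a • gen2 - s • gen1 ∈ Dspan n := by
      apply mem_D_of_ker n hn hno'
      · rw [map_sub, map_smul, hzA, hAg1, smul_zero, sub_zero]
      · rw [map_sub, map_smul, hBg1, hs, smul_eq_mul]
        ring
    have : x = (x - a • gen2 - s • gen1) + s • gen1 + a • gen2 := by abel
    rw [this]
    exact Submodule.add_mem _ (Submodule.add_mem _ (hDY hmem)
      (Submodule.smul_mem _ _ hg1Y)) (Submodule.smul_mem _ _ hg2Y)
  · -- span ≤ X
    rw [Submodule.span_le]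
    rintro z hz
    rcases hz with ⟨i, hi, rfl⟩ | hz
    · obtain ⟨hi1, hi2⟩ := hi
      exact h2 i ⟨by omega, hi2⟩
    · rcases hz with rfl | hz
      · exact hg1X
      · rw [Set.mem_singleton_iff] at hz
        rw [hz]
        exact hg2X

/-- For `n ≥ 3` odd and a subgroup `X` of the weight lattice `Λ` of `SL(n+1)`,
the following are equivalent: (i) `X` has full rank, contains `σ_1, …, σ_{n−1}`,
and `{α_1^∨|_X, α_3^∨|_X, …, α_n^∨|_X}` is part of a `ℤ`-basis of `X^*`;
(ii) `X = ⟨σ_2, …, σ_{n−1}, e·ω_{n−1}, r·ω_{n−1} + ω_n⟩_ℤ` for some `e, r ∈ ℕ` with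
`e ∣ (n+1)/2` and `0 ≤ r ≤ e−1`. -/
theorem stmt15 (n : ℕ) (hn : 3 ≤ n) (hno : Odd n) (X : Submodule ℤ (Fin n → ℤ)) :
    (Module.finrank ℤ X = n ∧ (∀ i ∈ Set.Icc 1 (n - 1), sig n i ∈ X) ∧
        IsPartOfBasis (oddCoroots n X)) ↔
      ∃ e r : ℕ, e ∣ (n + 1) / 2 ∧ r ≤ e - 1 ∧
        X = Submodule.span ℤ (sig n '' Set.Icc 2 (n - 1) ∪
          {(e : ℤ) • w n (n - 1), (r : ℤ) • w n (n - 1) + w n n}) := by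
  have hno' : n % 2 = 1 := Nat.odd_iff.mp hno
  constructor
  · rintro ⟨h1, h2, h3⟩
    exact dir1 n hn hno' X h2 h3
  · rintro ⟨e, r, hdvd, hrle, hX⟩
    exact dir2 n hn hno' e r hdvd X hX
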